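/- Let R be a commutative ring of stable rank 1. Then for every n ≥ 2 the group of elementary matrices E_n(R) acts transitively on the set of unimodular rows Um_n(R); in particular R is a GE-ring (GL_n(R) = GE_n(R) for all n). -/

import Mathlib

open Matrix

/-- The set of elementary matrices in `GL n R`. -/
def ElementaryMatrices (R : Type) [CommRing R] (n : ℕ) : Set (GL (Fin n) R) :=
  {M | ∃ (i j : Fin n) (r : R), i ≠ j ∧
    (M : Matrix (Fin n) (Fin n) R) = 1 + Matrix.single i j r}

/-- `E_n(R)`, the subgroup of `GL n R` generated by elementary matrices. -/
def ElementarySubgroup (R : Type) [CommRing R] (n : ℕ) : Subgroup (GL (Fin n) R) :=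
  Subgroup.closure (ElementaryMatrices R n)

/-- The set of invertible diagonal matrices in `GL n R`. -/
def DiagonalMatrices (R : Type) [CommRing R] (n : ℕ) : Set (GL (Fin n) R) :=
  {M | ∃ d : Fin n → Rˣ,
    (M : Matrix (Fin n) (Fin n) R) = Matrix.diagonal (fun i => (d i : R))}

/-- `GE_n(R)`, the subgroup of `GL n R` generated by elementary and diagonal matrices. -/
def GESubgroup (R : Type) [CommRing R] (n : ℕ) : Subgroup (GL (Fin n) R) :=
  Subgroup.closure (ElementaryMatrices R n ∪ DiagonalMatrices R n)

section Helpers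

variable {R : Type} [CommRing R] {n : ℕ}

/-- A unit of the matrix ring of the form `1 + A` with `A² = 0`. -/
def addGL (A : Matrix (Fin n) (Fin n) R) (h : A * A = 0) : GL (Fin n) R where
  val := 1 + A
  inv := 1 - A
  val_inv := by
    rw [mul_sub, mul_one, add_mul, one_mul, h, add_zero, add_sub_cancel_right]
  inv_val := by
    rw [sub_mul, one_mul, mul_add, mul_one, h, add_zero, add_sub_cancel_right]

def elemGL (i j : Fin n) (hij : i ≠ j) (r : R) : GL (Fin n) R :=
  addGL (Matrix.single i j r)
    (single_mul_single_of_ne r i j i (Ne.symm hij) r)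

lemma elemGL_mem (i j : Fin n) (hij : i ≠ j) (r : R) :
    elemGL i j hij r ∈ ElementarySubgroup R n :=
  Subgroup.subset_closure ⟨i, j, r, hij, rfl⟩

def transvecIn (κ : Fin n) (s : Fin n → R) (hs : s κ = 0) : GL (Fin n) R :=
  addGL (∑ j, Matrix.single j κ (s j)) (by
    rw [Finset.sum_mul_sum]
    apply Finset.sum_eq_zero; intro j _
    apply Finset.sum_eq_zero; intro j' _
    by_cases h : j' = κ
    · subst h; rw [hs, single_zero, mul_zero]
    · exact single_mul_single_of_ne _ _ _ _ (Ne.symm h) _)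

def transvecOut (κ : Fin n) (s : Fin n → R) (hs : s κ = 0) : GL (Fin n) R :=
  addGL (∑ j, Matrix.single κ j (s j)) (by
    rw [Finset.sum_mul_sum]
    apply Finset.sum_eq_zero; intro j _
    apply Finset.sum_eq_zero; intro j' _
    by_cases h : j = κ
    · subst h; rw [hs, single_zero, zero_mul]
    · exact single_mul_single_of_ne _ _ _ _ h _)

lemma transvecIn_val (κ : Fin n) (s : Fin n → R) (hs : s κ = 0) :
    (transvecIn κ s hs : Matrix (Fin n) (Fin n) R) = 1 + ∑ j, Matrix.single j κ (s j) := rfl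

lemma transvecOut_val (κ : Fin n) (s : Fin n → R) (hs : s κ = 0) :
    (transvecOut κ s hs : Matrix (Fin n) (Fin n) R) = 1 + ∑ j, Matrix.single κ j (s j) := rfl

lemma aux_mem_in (κ : Fin n) (s : Fin n → R) (T : Finset (Fin n)) (hT : κ ∉ T) :
    ∃ U ∈ ElementarySubgroup R n, (U : Matrix (Fin n) (Fin n) R) = 1 + ∑ j ∈ T, Matrix.single j κ (s j) := by
  classical
  induction T using Finset.induction with
  | empty => exact ⟨1, one_mem _, by simp⟩
  | @insert a T haT ih =>
    have haκ : a ≠ κ := fun h => hT (by rw [← h]; exact Finset.mem_insert_self a T)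
    obtain ⟨U, hU, hUval⟩ := ih (fun h => hT (Finset.mem_insert_of_mem h))
    refine ⟨elemGL a κ haκ (s a) * U, mul_mem (elemGL_mem a κ haκ (s a)) hU, ?_⟩
    have hz : Matrix.single a κ (s a) * (∑ j ∈ T, Matrix.single j κ (s j)) = 0 := by
      rw [Finset.mul_sum]
      apply Finset.sum_eq_zero; intro j hj
      exact single_mul_single_of_ne _ _ _ _
        (fun h => hT (by rw [h]; exact Finset.mem_insert_of_mem hj)) _
    have : (↑(elemGL a κ haκ (s a) * U) : Matrix (Fin n) (Fin n) R)
        = (1 + Matrix.single a κ (s a)) * (1 + ∑ j ∈ T, Matrix.single j κ (s j)) := by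
      rw [Units.val_mul, hUval]; rfl
    rw [this, Finset.sum_insert haT, add_mul, one_mul, mul_add, mul_one, hz, add_zero]
    abel

lemma aux_mem_out (κ : Fin n) (s : Fin n → R) (T : Finset (Fin n)) (hT : κ ∉ T) :
    ∃ U ∈ ElementarySubgroup R n, (U : Matrix (Fin n) (Fin n) R) = 1 + ∑ j ∈ T, Matrix.single κ j (s j) := by
  classical
  induction T using Finset.induction with
  | empty => exact ⟨1, one_mem _, by simp⟩
  | @insert a T haT ih =>
    have haκ : κ ≠ a := fun h => hT (by rw [h]; exact Finset.mem_insert_self a T)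
    obtain ⟨U, hU, hUval⟩ := ih (fun h => hT (Finset.mem_insert_of_mem h))
    refine ⟨elemGL κ a haκ (s a) * U,
      mul_mem (elemGL_mem _ _ _ _) hU, ?_⟩
    have hz : Matrix.single κ a (s a) * (∑ j ∈ T, Matrix.single κ j (s j)) = 0 := by
      rw [Finset.mul_sum]
      apply Finset.sum_eq_zero; intro j hj
      exact single_mul_single_of_ne _ _ _ _ (fun h => haκ h.symm) _
    have : (↑(elemGL κ a haκ (s a) * U) : Matrix (Fin n) (Fin n) R)
        = (1 + Matrix.single κ a (s a)) * (1 + ∑ j ∈ T, Matrix.single κ j (s j)) := by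
      rw [Units.val_mul, hUval]; rfl
    rw [this, Finset.sum_insert haT, add_mul, one_mul, mul_add, mul_one, hz, add_zero]
    abel

lemma transvecIn_mem (κ : Fin n) (s : Fin n → R) (hs : s κ = 0) :
    transvecIn κ s hs ∈ ElementarySubgroup R n := by
  obtain ⟨U, hU, hUval⟩ := aux_mem_in κ s (Finset.univ.erase κ) (Finset.notMem_erase κ _)
  have : transvecIn κ s hs = U := by
    apply Units.ext
    rw [hUval, transvecIn_val]
    congr 1
    exact (Finset.sum_erase _ (by rw [hs, single_zero])).symm
  rw [this]; exact hU

lemma transvecOut_mem (κ : Fin n) (s : Fin n → R) (hs : s κ = 0) :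
    transvecOut κ s hs ∈ ElementarySubgroup R n := by
  obtain ⟨U, hU, hUval⟩ := aux_mem_out κ s (Finset.univ.erase κ) (Finset.notMem_erase κ _)
  have : transvecOut κ s hs = U := by
    apply Units.ext
    rw [hUval, transvecOut_val]
    congr 1
    exact (Finset.sum_erase _ (by rw [hs, single_zero])).symm
  rw [this]; exact hU

def diagGL (d : Fin n → Rˣ) : GL (Fin n) R where
  val := Matrix.diagonal (fun i => (d i : R))
  inv := Matrix.diagonal (fun i => ((d i)⁻¹ : Rˣ))
  val_inv := by rw [diagonal_mul_diagonal]; simp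
  inv_val := by rw [diagonal_mul_diagonal]; simp

-- multiplication formulas
lemma mul_transvecIn_apply (κ : Fin n) (s : Fin n → R) (hs : s κ = 0)
    (X : Matrix (Fin n) (Fin n) R) (i m : Fin n) :
    (X * (transvecIn κ s hs : Matrix (Fin n) (Fin n) R)) i m
      = X i m + if m = κ then ∑ j, X i j * s j else 0 := by
  rw [transvecIn_val, mul_add, mul_one, Matrix.add_apply, Finset.mul_sum, Matrix.sum_apply]
  congr 1
  by_cases h : m = κ
  · subst h
    rw [if_pos rfl]
    exact Finset.sum_congr rfl fun j _ => mul_single_apply_same (s j) j m i X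
  · rw [if_neg h]
    exact Finset.sum_eq_zero fun j _ => mul_single_apply_of_ne (s j) j κ i m h X

lemma mul_transvecOut_apply (κ : Fin n) (s : Fin n → R) (hs : s κ = 0)
    (X : Matrix (Fin n) (Fin n) R) (i m : Fin n) :
    (X * (transvecOut κ s hs : Matrix (Fin n) (Fin n) R)) i m
      = X i m + X i κ * s m := by
  rw [transvecOut_val, mul_add, mul_one, Matrix.add_apply, Finset.mul_sum, Matrix.sum_apply]
  congr 1
  rw [Finset.sum_eq_single m]
  · exact mul_single_apply_same (s m) κ m i X
  · intro b _ hb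
    exact mul_single_apply_of_ne (s b) κ b i m (Ne.symm hb) X
  · intro h; exact absurd (Finset.mem_univ m) h

lemma transvecIn_mul_apply (κ : Fin n) (s : Fin n → R) (hs : s κ = 0)
    (X : Matrix (Fin n) (Fin n) R) (i m : Fin n) :
    ((transvecIn κ s hs : Matrix (Fin n) (Fin n) R) * X) i m
      = X i m + s i * X κ m := by
  rw [transvecIn_val, add_mul, one_mul, Matrix.add_apply, Finset.sum_mul, Matrix.sum_apply]
  congr 1
  rw [Finset.sum_eq_single i]
  · exact single_mul_apply_same (s i) i κ m X
  · intro b _ hb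
    exact single_mul_apply_of_ne (s b) b κ i m (Ne.symm hb) X
  · intro h; exact absurd (Finset.mem_univ i) h

lemma vecMul_apply' (v : Fin n → R) (M : Matrix (Fin n) (Fin n) R) (m : Fin n) :
    Matrix.vecMul v M m = ∑ a, v a * M a m := rfl

lemma sumIn_apply (κ : Fin n) (s : Fin n → R) (a m : Fin n) :
    (∑ j, Matrix.single j κ (s j)) a m = if m = κ then s a else 0 := by
  rw [Matrix.sum_apply, Finset.sum_eq_single a]
  · by_cases h : m = κ
    · subst h; rw [if_pos rfl, single_apply_same]
    · rw [if_neg h, single_apply_of_ne _ _ _ _ _ (fun hc => h hc.2.symm)]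
  · intro b _ hb
    rw [single_apply_of_ne _ _ _ _ _ (fun hc => hb hc.1)]
  · intro h; exact absurd (Finset.mem_univ a) h

lemma sumOut_apply (κ : Fin n) (s : Fin n → R) (a m : Fin n) :
    (∑ j, Matrix.single κ j (s j)) a m = if a = κ then s m else 0 := by
  rw [Matrix.sum_apply, Finset.sum_eq_single m]
  · by_cases h : a = κ
    · subst h; rw [if_pos rfl, single_apply_same]
    · rw [if_neg h, single_apply_of_ne _ _ _ _ _ (fun hc => h hc.1.symm)]
  · intro b _ hb
    rw [single_apply_of_ne _ _ _ _ _ (fun hc => hb hc.2)]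
  · intro h; exact absurd (Finset.mem_univ m) h

lemma vecMul_transvecIn (κ : Fin n) (s : Fin n → R) (hs : s κ = 0) (v : Fin n → R) (m : Fin n) :
    Matrix.vecMul v (transvecIn κ s hs : Matrix (Fin n) (Fin n) R) m
      = v m + if m = κ then ∑ j, v j * s j else 0 := by
  rw [transvecIn_val, Matrix.vecMul_add, Matrix.vecMul_one, Pi.add_apply]
  congr 1
  rw [vecMul_apply']
  simp only [sumIn_apply]
  by_cases h : m = κ
  · simp [h]
  · simp [h]

lemma vecMul_transvecOut (κ : Fin n) (s : Fin n → R) (hs : s κ = 0) (v : Fin n → R) (m : Fin n) :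
    Matrix.vecMul v (transvecOut κ s hs : Matrix (Fin n) (Fin n) R) m
      = v m + v κ * s m := by
  rw [transvecOut_val, Matrix.vecMul_add, Matrix.vecMul_one, Pi.add_apply]
  congr 1
  rw [vecMul_apply']
  simp only [sumOut_apply, mul_ite, mul_zero]
  rw [Finset.sum_ite_eq' Finset.univ κ (fun a => v a * s m)]
  simp

lemma exists_unit_comb (hsr : ∀ a b : R, Ideal.span {a, b} = ⊤ → ∃ s : R, IsUnit (a + s * b))
    (v : Fin n → R) (κ : Fin n) (hv : Ideal.span (Set.range v) = ⊤) :
    ∃ s : Fin n → R, s κ = 0 ∧ IsUnit (v κ + ∑ j, s j * v j) := by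
  classical
  have h1 : (1 : R) ∈ Ideal.span (Set.range v) := hv ▸ Submodule.mem_top
  obtain ⟨c, hc⟩ := Ideal.mem_span_range_iff_exists_fun.mp h1
  set b : R := ∑ j ∈ Finset.univ.erase κ, c j * v j with hbdef
  have hb : c κ * v κ + b = 1 := by
    rw [hbdef, Finset.add_sum_erase Finset.univ (fun j => c j * v j) (Finset.mem_univ κ)]; exact hc
  have hspan : Ideal.span {v κ, b} = ⊤ := by
    rw [Ideal.eq_top_iff_one, ← hb]
    exact add_mem
      (Ideal.mul_mem_left _ _ (Ideal.subset_span (by simp)))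
      (Ideal.subset_span (by simp))
  obtain ⟨t, ht⟩ := hsr (v κ) b hspan
  refine ⟨fun j => if j = κ then 0 else t * c j, if_pos rfl, ?_⟩
  have : ∑ j, (if j = κ then 0 else t * c j) * v j = t * b := by
    rw [← Finset.sum_erase (s := Finset.univ) (a := κ)
      (f := fun j => (if j = κ then 0 else t * c j) * v j) (by simp),
      hbdef, Finset.mul_sum]
    refine Finset.sum_congr rfl fun j hj => ?_
    rw [if_neg (Finset.ne_of_mem_erase hj), mul_assoc]
  rw [this]; exact ht

lemma reduce_row (hsr : ∀ a b : R, Ideal.span {a, b} = ⊤ → ∃ s : R, IsUnit (a + s * b))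
    (hn : 2 ≤ n) (v : Fin n → R) (hv : Ideal.span (Set.range v) = ⊤) :
    ∃ E ∈ ElementarySubgroup R n,
      Matrix.vecMul v (E : Matrix (Fin n) (Fin n) R) = Pi.single (⟨0, by omega⟩ : Fin n) 1 := by
  classical
  set z : Fin n := ⟨0, by omega⟩ with hz
  set o : Fin n := ⟨1, by omega⟩ with ho
  have hzo : z ≠ o := by simp [hz, ho, Fin.ext_iff]
  obtain ⟨s, hs0, hu⟩ := exists_unit_comb hsr v z hv
  obtain ⟨u, huval⟩ := hu
  -- step 1 : make entry z a unit
  set E₁ := transvecIn z s hs0 with hE₁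
  set v₁ := Matrix.vecMul v (E₁ : Matrix (Fin n) (Fin n) R) with hv₁
  have hv₁z : v₁ z = (u : R) := by
    rw [hv₁, vecMul_transvecIn, if_pos rfl, huval]
    congr 1
    exact Finset.sum_congr rfl fun j _ => mul_comm _ _
  have hv₁ne : ∀ m, m ≠ z → v₁ m = v m := by
    intro m hm; rw [hv₁, vecMul_transvecIn, if_neg hm, add_zero]
  -- step 2 : clear all other entries
  set E₂ := transvecOut z (fun m => if m = z then 0 else -(v₁ m) * ((u⁻¹ : Rˣ) : R))
    (if_pos rfl) with hE₂
  set v₂ := Matrix.vecMul v₁ (E₂ : Matrix (Fin n) (Fin n) R) with hv₂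
  have hv₂eq : ∀ m, v₂ m = if m = z then (u : R) else 0 := by
    intro m
    rw [hv₂, hE₂, vecMul_transvecOut]
    by_cases hm : m = z
    · subst hm; simp [hv₁z]
    · simp only [if_neg hm, hv₁z]
      have h2 : (u : R) * (-(v₁ m) * ((u⁻¹ : Rˣ) : R))
          = -(v₁ m) * ((u : R) * ((u⁻¹ : Rˣ) : R)) := by ring
      rw [h2, Units.mul_inv, mul_one]; ring
  -- step 3 : (u,0,...) → (u,1,0,...)
  set E₃ := transvecOut z (Pi.single o ((u⁻¹ : Rˣ) : R)) (Pi.single_eq_of_ne hzo _) with hE₃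
  set v₃ := Matrix.vecMul v₂ (E₃ : Matrix (Fin n) (Fin n) R) with hv₃
  have hv₃eq : ∀ m, v₃ m = if m = z then (u : R) else if m = o then 1 else 0 := by
    intro m
    rw [hv₃, hE₃, vecMul_transvecOut, hv₂eq m, hv₂eq z, if_pos rfl]
    by_cases hm : m = z
    · subst hm; rw [if_pos rfl, if_pos rfl, Pi.single_eq_of_ne hzo, mul_zero, add_zero]
    · rw [if_neg hm, if_neg hm, zero_add]
      by_cases hmo : m = o
      · subst hmo; rw [if_pos rfl, Pi.single_eq_same, Units.mul_inv]
      · rw [if_neg hmo, Pi.single_eq_of_ne hmo, mul_zero]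
  -- step 4 : (u,1,0,...) → (1,1,0,...)
  set E₄ := transvecIn z (Pi.single o ((1 : R) - (u : R))) (Pi.single_eq_of_ne hzo _) with hE₄
  set v₄ := Matrix.vecMul v₃ (E₄ : Matrix (Fin n) (Fin n) R) with hv₄
  have hsum4 : ∑ j, v₃ j * (Pi.single o ((1 : R) - (u : R)) : Fin n → R) j = v₃ o * ((1 : R) - (u : R)) := by
    rw [Finset.sum_eq_single o]
    · rw [Pi.single_eq_same]
    · intro b _ hb; rw [Pi.single_eq_of_ne hb, mul_zero]
    · intro h; exact absurd (Finset.mem_univ o) h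
  have hv₄eq : ∀ m, v₄ m = if m = z then 1 else if m = o then 1 else 0 := by
    intro m
    rw [hv₄, hE₄, vecMul_transvecIn, hv₃eq m]
    by_cases hm : m = z
    · subst hm
      rw [if_pos rfl, if_pos rfl, if_pos rfl, hsum4, hv₃eq o, if_neg (Ne.symm hzo),
        if_pos rfl, one_mul]
      ring
    · rw [if_neg hm, if_neg hm, if_neg hm, add_zero]
  -- step 5 : (1,1,0,...) → (1,0,0,...)
  set E₅ := transvecOut z (Pi.single o ((-1 : R))) (Pi.single_eq_of_ne hzo _) with hE₅
  set v₅ := Matrix.vecMul v₄ (E₅ : Matrix (Fin n) (Fin n) R) with hv₅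
  have hv₅eq : v₅ = Pi.single z (1 : R) := by
    funext m
    rw [hv₅, hE₅, vecMul_transvecOut, hv₄eq m, hv₄eq z, if_pos rfl]
    by_cases hm : m = z
    · subst hm
      rw [if_pos rfl, Pi.single_eq_of_ne hzo, mul_zero, add_zero, Pi.single_eq_same]
    · rw [if_neg hm, Pi.single_eq_of_ne hm]
      by_cases hmo : m = o
      · subst hmo; rw [if_pos rfl, Pi.single_eq_same]; ring
      · rw [if_neg hmo, Pi.single_eq_of_ne hmo, mul_zero, add_zero]
  refine ⟨E₁ * E₂ * E₃ * E₄ * E₅,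
    mul_mem (mul_mem (mul_mem (mul_mem (transvecIn_mem _ _ _) (transvecOut_mem _ _ _))
      (transvecOut_mem _ _ _)) (transvecIn_mem _ _ _)) (transvecOut_mem _ _ _), ?_⟩
  have hcoe : ((E₁ * E₂ * E₃ * E₄ * E₅ : GL (Fin n) R) : Matrix (Fin n) (Fin n) R)
      = (E₁ : Matrix (Fin n) (Fin n) R) * E₂ * E₃ * E₄ * E₅ := by
    simp [Units.val_mul]
  rw [hcoe]
  rw [← Matrix.vecMul_vecMul, ← Matrix.vecMul_vecMul, ← Matrix.vecMul_vecMul,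
    ← Matrix.vecMul_vecMul, ← hv₁, ← hv₂, ← hv₃, ← hv₄, ← hv₅, hv₅eq]

lemma ESub_le_GESub : ElementarySubgroup R n ≤ GESubgroup R n :=
  Subgroup.closure_mono Set.subset_union_left

lemma diagGL_mem (d : Fin n → Rˣ) : diagGL d ∈ GESubgroup R n :=
  Subgroup.subset_closure (Or.inr ⟨d, rfl⟩)

lemma GE_top (hsr : ∀ a b : R, Ideal.span {a, b} = ⊤ → ∃ s : R, IsUnit (a + s * b)) :
    GESubgroup R n = ⊤ := by
  classical
  rw [eq_top_iff]
  intro M _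
  have key : ∀ k : ℕ, k ≤ n → ∃ A B : GL (Fin n) R, A ∈ GESubgroup R n ∧ B ∈ GESubgroup R n ∧
      ∀ i j : Fin n, ((i : ℕ) < k ∨ (j : ℕ) < k) →
        ((A * M * B : GL (Fin n) R) : Matrix (Fin n) (Fin n) R) i j
          = (1 : Matrix (Fin n) (Fin n) R) i j := by
    intro k
    induction k with
    | zero => exact fun _ => ⟨1, 1, one_mem _, one_mem _, fun i j h => by omega⟩
    | succ k ih =>
      intro hk1
      obtain ⟨A, B, hA, hB, hinv⟩ := ih (by omega)
      set N : GL (Fin n) R := A * M * B with hN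
      set κ : Fin n := ⟨k, by omega⟩ with hκ
      -- row κ of N is unimodular
      have hrow : Ideal.span (Set.range fun j => (N : Matrix (Fin n) (Fin n) R) κ j) = ⊤ := by
        rw [Ideal.eq_top_iff_one, Ideal.mem_span_range_iff_exists_fun]
        refine ⟨fun j => ((N⁻¹ : GL (Fin n) R) : Matrix (Fin n) (Fin n) R) j κ, ?_⟩
        have hNN : (N : Matrix (Fin n) (Fin n) R) * ((N⁻¹ : GL (Fin n) R) : Matrix (Fin n) (Fin n) R)
            = 1 := by
          rw [← Units.val_mul, mul_inv_cancel]; rfl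
        calc ∑ j, ((N⁻¹ : GL (Fin n) R) : Matrix (Fin n) (Fin n) R) j κ
                * (N : Matrix (Fin n) (Fin n) R) κ j
            = ∑ j, (N : Matrix (Fin n) (Fin n) R) κ j
                * ((N⁻¹ : GL (Fin n) R) : Matrix (Fin n) (Fin n) R) j κ :=
              Finset.sum_congr rfl fun j _ => mul_comm _ _
          _ = ((N : Matrix (Fin n) (Fin n) R) * ((N⁻¹ : GL (Fin n) R) : Matrix (Fin n) (Fin n) R)) κ κ :=
              (Matrix.mul_apply).symm
          _ = 1 := by rw [hNN, Matrix.one_apply_eq]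
      obtain ⟨s, hsκ, hu⟩ := exists_unit_comb hsr (fun j => (N : Matrix (Fin n) (Fin n) R) κ j) κ hrow
      obtain ⟨u, huval⟩ := hu
      have hκval : (κ : ℕ) = k := rfl
      have hκnotlt : ¬((κ : ℕ) < k) := by omega
      have hNz : ∀ j : Fin n, (j : ℕ) < k → (N : Matrix (Fin n) (Fin n) R) κ j = 0 := by
        intro j hj
        rw [hinv κ j (Or.inr hj)]
        exact Matrix.one_apply_ne (by intro hc; rw [← hc, hκval] at hj; omega)
      set s' : Fin n → R := fun j => if (j : ℕ) < k then 0 else s j with hs'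
      have hs'def : ∀ j, s' j = if (j : ℕ) < k then 0 else s j := fun j => rfl
      have hs'κ : s' κ = 0 := by rw [hs'def, hκval, if_neg (by omega)]; exact hsκ
      have hsum' : ∑ j, s' j * (N : Matrix (Fin n) (Fin n) R) κ j
          = ∑ j, s j * (N : Matrix (Fin n) (Fin n) R) κ j := by
        refine Finset.sum_congr rfl fun j _ => ?_
        by_cases hj : (j : ℕ) < k
        · rw [hs'def, if_pos hj, hNz j hj, mul_zero, mul_zero]
        · rw [hs'def, if_neg hj]
      -- step (b): make the pivot a unit
      set N₁ : GL (Fin n) R := N * transvecIn κ s' hs'κ with hN₁def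
      have f1 : ∀ i m, (N₁ : Matrix (Fin n) (Fin n) R) i m
          = (N : Matrix (Fin n) (Fin n) R) i m
            + if m = κ then ∑ j, (N : Matrix (Fin n) (Fin n) R) i j * s' j else 0 := by
        intro i m
        rw [hN₁def, Units.val_mul]
        exact mul_transvecIn_apply κ s' hs'κ _ i m
      have hN₁inv : ∀ i m : Fin n, ((i : ℕ) < k ∨ (m : ℕ) < k) →
          (N₁ : Matrix (Fin n) (Fin n) R) i m = (1 : Matrix (Fin n) (Fin n) R) i m := by
        intro i m him
        rw [f1]
        by_cases hm : m = κ
        · subst hm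
          have hik : (i : ℕ) < k := him.resolve_right hκnotlt
          have hiκ : i ≠ κ := by intro hc; rw [hc, hκval] at hik; omega
          have hsm : ∑ j, (N : Matrix (Fin n) (Fin n) R) i j * s' j = s' i := by
            calc ∑ j, (N : Matrix (Fin n) (Fin n) R) i j * s' j
                = ∑ j, (1 : Matrix (Fin n) (Fin n) R) i j * s' j :=
                  Finset.sum_congr rfl fun j _ => by rw [hinv i j (Or.inl hik)]
              _ = s' i := by simp [Matrix.one_apply]
          rw [if_pos rfl, hinv i κ (Or.inl hik), hsm, hs'def, if_pos hik, add_zero]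
        · rw [if_neg hm, add_zero]; exact hinv i m him
      have hN₁κκ : (N₁ : Matrix (Fin n) (Fin n) R) κ κ = (u : R) := by
        rw [f1, if_pos rfl, huval]
        congr 1
        rw [← hsum']
        exact Finset.sum_congr rfl fun j _ => mul_comm _ _
      have hN₁row : ∀ m, m ≠ κ → (N₁ : Matrix (Fin n) (Fin n) R) κ m
          = (N : Matrix (Fin n) (Fin n) R) κ m := by
        intro m hm; rw [f1, if_neg hm, add_zero]
      have hui : (u : R) * ((u⁻¹ : Rˣ) : R) = 1 := u.mul_inv
      have hiu : ((u⁻¹ : Rˣ) : R) * (u : R) = 1 := u.inv_mul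
      -- step (c): clear the rest of row κ
      set t : Fin n → R := fun m => if m = κ then 0
        else -((N₁ : Matrix (Fin n) (Fin n) R) κ m) * ((u⁻¹ : Rˣ) : R) with ht
      have htdef : ∀ m, t m = if m = κ then 0
          else -((N₁ : Matrix (Fin n) (Fin n) R) κ m) * ((u⁻¹ : Rˣ) : R) := fun m => rfl
      have htκ : t κ = 0 := by rw [htdef, if_pos rfl]
      set N₂ : GL (Fin n) R := N₁ * transvecOut κ t htκ with hN₂def
      have f2 : ∀ i m, (N₂ : Matrix (Fin n) (Fin n) R) i m
          = (N₁ : Matrix (Fin n) (Fin n) R) i m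
            + (N₁ : Matrix (Fin n) (Fin n) R) i κ * t m := by
        intro i m
        rw [hN₂def, Units.val_mul]
        exact mul_transvecOut_apply κ t htκ _ i m
      have hN₂row : ∀ m, (N₂ : Matrix (Fin n) (Fin n) R) κ m
          = if m = κ then (u : R) else 0 := by
        intro m
        rw [f2, hN₁κκ, htdef]
        by_cases hm : m = κ
        · subst hm; rw [if_pos rfl, if_pos rfl, mul_zero, add_zero, hN₁κκ]
        · rw [if_neg hm, if_neg hm]
          have : (u : R) * (-((N₁ : Matrix (Fin n) (Fin n) R) κ m) * ((u⁻¹ : Rˣ) : R))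
              = -((N₁ : Matrix (Fin n) (Fin n) R) κ m) * ((u : R) * ((u⁻¹ : Rˣ) : R)) := by
            ring
          rw [this, hui, mul_one]; ring
      have hN₂inv : ∀ i m : Fin n, ((i : ℕ) < k ∨ (m : ℕ) < k) →
          (N₂ : Matrix (Fin n) (Fin n) R) i m = (1 : Matrix (Fin n) (Fin n) R) i m := by
        intro i m him
        rw [f2]
        by_cases hm : m = κ
        · subst hm
          rw [htκ, mul_zero, add_zero]
          exact hN₁inv i κ him
        · by_cases hmk : (m : ℕ) < k
          · have htm : t m = 0 := by
              rw [htdef, if_neg hm, hN₁row m hm, hNz m hmk]; ring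
            rw [htm, mul_zero, add_zero]; exact hN₁inv i m him
          · have hik : (i : ℕ) < k := him.resolve_right hmk
            have hiκ : i ≠ κ := by intro hc; rw [hc, hκval] at hik; omega
            have : (N₁ : Matrix (Fin n) (Fin n) R) i κ = 0 := by
              rw [hN₁inv i κ (Or.inl hik)]
              exact Matrix.one_apply_ne hiκ
            rw [this, zero_mul, add_zero]; exact hN₁inv i m him
      -- step (d): clear the rest of column κ
      set w : Fin n → R := fun i => if i = κ then 0
        else -((N₂ : Matrix (Fin n) (Fin n) R) i κ) * ((u⁻¹ : Rˣ) : R) with hw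
      have hwdef : ∀ i, w i = if i = κ then 0
          else -((N₂ : Matrix (Fin n) (Fin n) R) i κ) * ((u⁻¹ : Rˣ) : R) := fun i => rfl
      have hwκ : w κ = 0 := by rw [hwdef, if_pos rfl]
      set N₃ : GL (Fin n) R := transvecIn κ w hwκ * N₂ with hN₃def
      have f3 : ∀ i m, (N₃ : Matrix (Fin n) (Fin n) R) i m
          = (N₂ : Matrix (Fin n) (Fin n) R) i m
            + w i * (N₂ : Matrix (Fin n) (Fin n) R) κ m := by
        intro i m
        rw [hN₃def, Units.val_mul]
        exact transvecIn_mul_apply κ w hwκ _ i m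
      have hN₃row : ∀ m, (N₃ : Matrix (Fin n) (Fin n) R) κ m
          = if m = κ then (u : R) else 0 := by
        intro m; rw [f3, hwκ, zero_mul, add_zero, hN₂row]
      have hN₃col : ∀ i, i ≠ κ → (N₃ : Matrix (Fin n) (Fin n) R) i κ = 0 := by
        intro i hi
        rw [f3, hN₂row, if_pos rfl, hwdef, if_neg hi]
        have : (N₂ : Matrix (Fin n) (Fin n) R) i κ
            + -((N₂ : Matrix (Fin n) (Fin n) R) i κ) * ((u⁻¹ : Rˣ) : R) * (u : R)
            = (N₂ : Matrix (Fin n) (Fin n) R) i κ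
              - (N₂ : Matrix (Fin n) (Fin n) R) i κ * (((u⁻¹ : Rˣ) : R) * (u : R)) := by
          ring
        rw [this, hiu, mul_one, sub_self]
      have hN₃off : ∀ i m, m ≠ κ → (N₃ : Matrix (Fin n) (Fin n) R) i m
          = (N₂ : Matrix (Fin n) (Fin n) R) i m := by
        intro i m hm
        rw [f3, hN₂row, if_neg hm, mul_zero, add_zero]
      -- step (e): scale the pivot to 1
      set d : Fin n → Rˣ := Function.update (fun _ : Fin n => (1 : Rˣ)) κ u⁻¹ with hd
      have hdκ : d κ = u⁻¹ := by rw [hd]; exact Function.update_self κ u⁻¹ (fun _ : Fin n => (1 : Rˣ))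
      have hdm : ∀ m, m ≠ κ → d m = 1 := fun m hm => by rw [hd]; exact Function.update_of_ne hm u⁻¹ (fun _ : Fin n => (1 : Rˣ))
      set N₄ : GL (Fin n) R := N₃ * diagGL d with hN₄def
      have f4 : ∀ i m, (N₄ : Matrix (Fin n) (Fin n) R) i m
          = (N₃ : Matrix (Fin n) (Fin n) R) i m * ((d m : Rˣ) : R) := by
        intro i m
        rw [hN₄def, Units.val_mul]
        exact Matrix.mul_diagonal _ _ _ _
      refine ⟨transvecIn κ w hwκ * A,
        B * transvecIn κ s' hs'κ * transvecOut κ t htκ * diagGL d,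
        mul_mem (ESub_le_GESub (transvecIn_mem κ w hwκ)) hA,
        mul_mem (mul_mem (mul_mem hB (ESub_le_GESub (transvecIn_mem κ s' hs'κ)))
          (ESub_le_GESub (transvecOut_mem κ t htκ))) (diagGL_mem d), ?_⟩
      have hprod : transvecIn κ w hwκ * A * M
          * (B * transvecIn κ s' hs'κ * transvecOut κ t htκ * diagGL d) = N₄ := by
        rw [hN₄def, hN₃def, hN₂def, hN₁def, hN]; group
      intro i m him
      rw [hprod, f4]
      by_cases hiκ : i = κ
      · subst hiκ
        by_cases hmκ : m = κ
        · subst hmκ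
          rw [hN₃row, if_pos rfl, hdκ, hui, Matrix.one_apply_eq]
        · rw [hN₃row, if_neg hmκ, zero_mul]
          exact (Matrix.one_apply_ne (fun h => hmκ h.symm)).symm
      · by_cases hmκ : m = κ
        · subst hmκ
          rw [hN₃col i hiκ, zero_mul]
          exact (Matrix.one_apply_ne hiκ).symm
        · have hik : (i : ℕ) ≠ k := fun h => hiκ (Fin.ext (h.trans hκval.symm))
          have hmk : (m : ℕ) ≠ k := fun h => hmκ (Fin.ext (h.trans hκval.symm))
          rw [hdm m hmκ, Units.val_one, mul_one, hN₃off i m hmκ]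
          exact hN₂inv i m (by omega)

  obtain ⟨A, B, hA, hB, h⟩ := key n le_rfl
  have hABM : A * M * B = 1 := by
    apply Units.ext
    apply Matrix.ext
    intro i j
    rw [h i j (Or.inl i.isLt)]; rfl
  have hM : M = A⁻¹ * B⁻¹ := by
    have : A⁻¹ * (A * M * B) * B⁻¹ = M := by group
    rw [← this, hABM]; group
  rw [hM]
  exact mul_mem (inv_mem hA) (inv_mem hB)

end Helpers

/-- If `R` has stable rank 1, then for every `n ≥ 2` the elementary group `E_n(R)`
acts transitively on unimodular rows, and `R` is a GE-ring. -/
theorem stmt_4 (R : Type) [CommRing R]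
    (hsr : ∀ a b : R, Ideal.span {a, b} = ⊤ → ∃ s : R, IsUnit (a + s * b)) :
    (∀ n : ℕ, 2 ≤ n → ∀ v w : Fin n → R,
      Ideal.span (Set.range v) = ⊤ → Ideal.span (Set.range w) = ⊤ →
        ∃ E ∈ ElementarySubgroup R n,
          Matrix.vecMul v (E : Matrix (Fin n) (Fin n) R) = w) ∧
    (∀ n : ℕ, GESubgroup R n = ⊤) := by
  constructor
  · intro n hn v w hv hw
    obtain ⟨Ev, hEv, hv1⟩ := reduce_row hsr hn v hv
    obtain ⟨Ew, hEw, hw1⟩ := reduce_row hsr hn w hw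
    refine ⟨Ev * Ew⁻¹, mul_mem hEv (inv_mem hEw), ?_⟩
    have hcoe : ((Ev * Ew⁻¹ : GL (Fin n) R) : Matrix (Fin n) (Fin n) R)
        = (Ev : Matrix (Fin n) (Fin n) R) * ((Ew⁻¹ : GL (Fin n) R) : Matrix (Fin n) (Fin n) R) :=
      Units.val_mul _ _
    rw [hcoe, ← Matrix.vecMul_vecMul, hv1, ← hw1, Matrix.vecMul_vecMul, ← Units.val_mul,
      mul_inv_cancel]
    simp
  · intro n
    exact GE_top hsr
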